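/- Let p ≥ 2 and d ≥ 4p² − 2p + 1 be integers. Then (2/p)·Σ_{i=0}^{p−1} C(d + 2p − 1 − 2i, 2p − 2i) ≥ (2/p)·(C(d+2p−1, 2p) + C(d+2p−3, 2p−2)) ≥ 4·C(d+2p−2, 2p−1) + 2, where C(n,r) denotes the binomial coefficient. -/

import Mathlib

lemma my_choose_ge_self {m j : ℕ} (h1 : 1 ≤ j) (h2 : j ≤ m / 2) : m ≤ m.choose j := by
  induction j with
  | zero => omega
  | succ j ih =>
    rcases Nat.eq_or_lt_of_le h1 with h | h
    · simp [← h]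
    · have hj : 1 ≤ j := by omega
      exact (ih hj (by omega)).trans (Nat.choose_le_succ_of_lt_half_left (by omega))

/-- For integers `p ≥ 2`, `d ≥ 4p² − 2p + 1`:
`(2/p)·Σ_{i=0}^{p−1} C(d+2p−1−2i, 2p−2i) ≥ (2/p)·(C(d+2p−1,2p)+C(d+2p−3,2p−2))
 ≥ 4·C(d+2p−2,2p−1) + 2`. -/
theorem stmt_4 (p d : ℕ) (hp : 2 ≤ p) (hd : 4 * p ^ 2 - 2 * p + 1 ≤ d) :
    ((2 : ℝ) / p) * ∑ i ∈ Finset.range p,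
        ((d + 2 * p - 1 - 2 * i).choose (2 * p - 2 * i) : ℝ)
      ≥ ((2 : ℝ) / p) *
        (((d + 2 * p - 1).choose (2 * p) : ℝ) + ((d + 2 * p - 3).choose (2 * p - 2) : ℝ)) ∧
    ((2 : ℝ) / p) *
        (((d + 2 * p - 1).choose (2 * p) : ℝ) + ((d + 2 * p - 3).choose (2 * p - 2) : ℝ))
      ≥ 4 * ((d + 2 * p - 2).choose (2 * p - 1) : ℝ) + 2 := by
  have hpq : p ≤ p ^ 2 := by nlinarith
  have hpq2 : 2 * p + 12 ≤ 4 * p ^ 2 := by nlinarith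
  obtain ⟨q, hq⟩ : ∃ q, p ^ 2 = q := ⟨_, rfl⟩
  rw [hq] at hd hpq hpq2
  have hd' : 13 ≤ d := by omega
  have hp0 : (0 : ℝ) < (p : ℝ) := by positivity
  have hdiv : (0 : ℝ) ≤ 2 / (p : ℝ) := by positivity
  constructor
  · apply mul_le_mul_of_nonneg_left _ hdiv
    have hsub : ({0, 1} : Finset ℕ) ⊆ Finset.range p := by
      intro i hi
      simp only [Finset.mem_insert, Finset.mem_singleton] at hi
      simp only [Finset.mem_range]
      omega
    have := Finset.sum_le_sum_of_subset_of_nonneg hsub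
      (fun i _ _ => by positivity :
        ∀ i ∈ Finset.range p, i ∉ ({0, 1} : Finset ℕ) →
          (0 : ℝ) ≤ ((d + 2 * p - 1 - 2 * i).choose (2 * p - 2 * i) : ℝ))
    refine le_trans (le_of_eq ?_) this
    rw [Finset.sum_pair (by norm_num)]
    congr 2 <;> omega
  · -- key identity: (d+2p-1) * C(d+2p-2, 2p-1) = C(d+2p-1, 2p) * (2p)
    have key : (d + 2 * p - 1) * (d + 2 * p - 2).choose (2 * p - 1)
        = (d + 2 * p - 1).choose (2 * p) * (2 * p) := by
      have h := Nat.add_one_mul_choose_eq (d + 2 * p - 2) (2 * p - 1)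
      have e1 : d + 2 * p - 2 + 1 = d + 2 * p - 1 := by omega
      have e2 : 2 * p - 1 + 1 = 2 * p := by omega
      rw [e1, e2] at h
      exact h
    have keyle : 4 * q * ((d + 2 * p - 2).choose (2 * p - 1))
        ≤ (d + 2 * p - 1).choose (2 * p) * (2 * p) := by
      rw [← key]
      exact Nat.mul_le_mul_right _ (by omega)
    have hB : p ≤ (d + 2 * p - 3).choose (2 * p - 2) := by
      have h1 : 1 ≤ 2 * p - 2 := by omega
      have h2 : 2 * p - 2 ≤ (d + 2 * p - 3) / 2 := by omega
      have := my_choose_ge_self h1 h2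
      omega
    have keyleR : 4 * (q : ℝ) * ((d + 2 * p - 2).choose (2 * p - 1) : ℝ)
        ≤ ((d + 2 * p - 1).choose (2 * p) : ℝ) * (2 * (p : ℝ)) := by
      exact_mod_cast keyle
    have hBR : (p : ℝ) ≤ ((d + 2 * p - 3).choose (2 * p - 2) : ℝ) := by exact_mod_cast hB
    have hqR : ((p : ℝ)) ^ 2 = (q : ℝ) := by exact_mod_cast congrArg (Nat.cast : ℕ → ℝ) hq
    have hpR : (2 : ℝ) ≤ (p : ℝ) := by exact_mod_cast hp
    have hC0 : (0 : ℝ) ≤ ((d + 2 * p - 2).choose (2 * p - 1) : ℝ) := by positivity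
    rw [ge_iff_le, div_mul_eq_mul_div, le_div_iff₀ hp0]
    nlinarith [keyleR, hBR, hC0, hp0, hpR, mul_pos hp0 hp0]
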